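/- Let a be a point of P^2(\bar{F}_q) whose Frobenius orbit {a, F(a), F^2(a), F^3(a)} has exactly 4 elements (i.e., a is a q^4-point). Then either all four points of the orbit lie on a common line, or no three of them are collinear. -/

import Mathlib

open Projectivization
open scoped LinearAlgebra.Projectivization

variable {K : Type} [Field K]

/-- The projective plane over `K`, as the projectivization of `K^3`. -/
abbrev Pt (K : Type) [Field K] := ℙ K (Fin 3 → K)

/-- Lines in the projective plane over `K`: projectivized nonzero linear forms. -/
abbrev Ln (K : Type) [Field K] := ℙ K ((Fin 3 → K) →ₗ[K] K)

/-- Incidence: the point lies on the line. -/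
def OnLine (x : Pt K) (ℓ : Ln K) : Prop := ℓ.rep x.rep = 0

/-- Three points are collinear: some nonzero linear form vanishes on all of them. -/
def Collinear3 (a b c : Pt K) : Prop :=
  ∃ f : (Fin 3 → K) →ₗ[K] K, f ≠ 0 ∧ f a.rep = 0 ∧ f b.rep = 0 ∧ f c.rep = 0

/-- The map on the projective plane induced by `x ↦ x ^ q` on coordinates. -/
noncomputable def Frob (q : ℕ) (x : Pt K) : Pt K :=
  if hq : q = 0 then x else
  Projectivization.mk K (fun i => x.rep i ^ q) (by
    intro h
    apply x.rep_nonzero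
    funext i
    have hi := congrFun h i
    simpa using (pow_eq_zero_iff hq).mp (by simpa using hi))

/-- The algebraic closure of the field with `p ^ n` elements. -/
abbrev Kbar (p n : ℕ) [Fact p.Prime] := AlgebraicClosure (GaloisField p n)

lemma crot {a b c : Pt K} (h : Collinear3 a b c) : Collinear3 b c a := by
  obtain ⟨f, h0, h1, h2, h3⟩ := h; exact ⟨f, h0, h2, h3, h1⟩

lemma cswap {a b c : Pt K} (h : Collinear3 a b c) : Collinear3 b a c := by
  obtain ⟨f, h0, h1, h2, h3⟩ := h; exact ⟨f, h0, h2, h1, h3⟩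

lemma rep_vanish (f : (Fin 3 → K) →ₗ[K] K) (v : Fin 3 → K) (hv : v ≠ 0) (h : f v = 0) :
    f (Projectivization.mk K v hv).rep = 0 := by
  obtain ⟨c, hc⟩ := Projectivization.exists_smul_eq_mk_rep K v hv
  rw [← hc, Units.smul_def, map_smul, h, smul_zero]

lemma line_unique {f g : (Fin 3 → K) →ₗ[K] K} (hf : f ≠ 0) (hg : g ≠ 0)
    {x y : Pt K} (hxy : x ≠ y) (hfx : f x.rep = 0) (hfy : f y.rep = 0)
    (hgx : g x.rep = 0) (hgy : g y.rep = 0) : LinearMap.ker f = LinearMap.ker g := by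
  have li : LinearIndependent K ![x.rep, y.rep] := by
    rw [LinearIndependent.pair_iff' x.rep_nonzero]
    intro a ha
    apply hxy
    rw [← Projectivization.mk_rep x, ← Projectivization.mk_rep y]
    exact ((Projectivization.mk_eq_mk_iff' K y.rep x.rep y.rep_nonzero x.rep_nonzero).2
      ⟨a, ha⟩).symm
  have hspan2 : Module.finrank K (Submodule.span K (Set.range ![x.rep, y.rep])) = 2 := by
    rw [finrank_span_eq_card li]; simp
  have key : ∀ h : (Fin 3 → K) →ₗ[K] K, h ≠ 0 → h x.rep = 0 → h y.rep = 0 →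
      Submodule.span K (Set.range ![x.rep, y.rep]) = LinearMap.ker h := by
    intro h hh hx hy
    have hle : Submodule.span K (Set.range ![x.rep, y.rep]) ≤ LinearMap.ker h := by
      rw [Submodule.span_le]
      rintro v ⟨i, rfl⟩
      fin_cases i <;> simpa [LinearMap.mem_ker]
    have hrange : LinearMap.range h = ⊤ := by
      rw [LinearMap.range_eq_top]
      intro c
      obtain ⟨v, hv⟩ : ∃ v, h v ≠ 0 := by
        by_contra hcon; push_neg at hcon; exact hh (LinearMap.ext fun v => hcon v)
      exact ⟨(c / h v) • v, by rw [map_smul, smul_eq_mul]; field_simp⟩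
    have hker : Module.finrank K (LinearMap.ker h) = 2 := by
      have := LinearMap.finrank_range_add_finrank_ker h
      rw [hrange] at this
      simp [Module.finrank_pi] at this
      omega
    exact Submodule.eq_of_le_of_finrank_le hle (by rw [hker, hspan2])
  rw [← key f hf hfx hfy, key g hg hgx hgy]

lemma frob_vanish (p n : ℕ) [Fact p.Prime] [CharP K p]
    (f : (Fin 3 → K) →ₗ[K] K) (hf : f ≠ 0) :
    ∃ g : (Fin 3 → K) →ₗ[K] K, g ≠ 0 ∧
      ∀ x : Pt K, f x.rep = 0 → g (Frob (p ^ n) x).rep = 0 := by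
  haveI : ExpChar K p := ExpChar.prime Fact.out
  set φ := iterateFrobenius K p n with hφ
  set g : (Fin 3 → K) →ₗ[K] K :=
    ∑ i : Fin 3, φ (f fun j => if i = j then 1 else 0) • (LinearMap.proj i) with hg
  have hgval : ∀ v : Fin 3 → K, g (fun i => v i ^ p ^ n) = φ (f v) := by
    intro v
    rw [LinearMap.pi_apply_eq_sum_univ f v, map_sum]
    simp only [hg, LinearMap.sum_apply, LinearMap.smul_apply, LinearMap.proj_apply,
      smul_eq_mul, map_mul]
    refine Finset.sum_congr rfl fun i _ => ?_
    simp only [hφ, iterateFrobenius_def]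
    ring
  have hgbasis : ∀ i : Fin 3, g (fun j => if i = j then (1:K) else 0)
      = φ (f fun j => if i = j then 1 else 0) := by
    intro i
    simp only [hg, LinearMap.sum_apply, LinearMap.smul_apply, LinearMap.proj_apply,
      smul_eq_mul]
    rw [Finset.sum_eq_single i]
    · simp
    · intro b _ hb
      rw [if_neg (Ne.symm hb), mul_zero]
    · simp
  have hgne : g ≠ 0 := by
    intro hzero
    apply hf
    have hcoef : ∀ i : Fin 3, f (fun j => if i = j then (1:K) else 0) = 0 := by
      intro i
      have := hgbasis i
      rw [hzero] at this
      simp at this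
      exact (iterateFrobenius K p n).injective (by simpa [hφ] using this.symm)
    apply LinearMap.ext
    intro v
    rw [LinearMap.pi_apply_eq_sum_univ f v]
    simp [hcoef]
  refine ⟨g, hgne, fun x hx => ?_⟩
  have hq : (p : ℕ) ^ n ≠ 0 := pow_ne_zero n (Nat.Prime.ne_zero Fact.out)
  simp only [Frob, dif_neg hq]
  apply rep_vanish
  rw [hgval, hx, map_zero]

theorem stmt_8 (p n : ℕ) [Fact p.Prime] (hn : n ≠ 0) (a : Pt (Kbar p n))
    (h4 : (Frob (p ^ n))^[4] a = a)
    (horb : ∀ i, 0 < i → i < 4 → (Frob (p ^ n))^[i] a ≠ a) :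
    (∃ ℓ : Ln (Kbar p n), ∀ i < 4, OnLine ((Frob (p ^ n))^[i] a) ℓ) ∨
    (∀ i j k, i < 4 → j < 4 → k < 4 → i ≠ j → i ≠ k → j ≠ k →
      ¬ Collinear3 ((Frob (p ^ n))^[i] a) ((Frob (p ^ n))^[j] a) ((Frob (p ^ n))^[k] a)) := by
  classical
  haveI : CharP (Kbar p n) p :=
    charP_of_injective_algebraMap (algebraMap (GaloisField p n) (Kbar p n)).injective p
  set F : Pt (Kbar p n) → Pt (Kbar p n) := Frob (p ^ n) with hF
  by_cases H : (∀ i j k, i < 4 → j < 4 → k < 4 → i ≠ j → i ≠ k → j ≠ k →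
      ¬ Collinear3 (F^[i] a) (F^[j] a) (F^[k] a))
  · exact Or.inr H
  left
  push_neg at H
  obtain ⟨i, j, k, hi, hj, hk, hij, hik, hjk, hc⟩ := H
  set Q : ℕ → Pt (Kbar p n) := fun m => F^[m % 4] a with hQ
  have hQlt : ∀ m, m < 4 → Q m = F^[m] a := by
    intro m hm; rw [hQ]; simp [Nat.mod_eq_of_lt hm]
  have hQmod : ∀ m, Q m = Q (m % 4) := by
    intro m; simp only [hQ]; congr 1; omega
  have hstep : ∀ m, F (Q m) = Q (m + 1) := by
    intro m
    have h1 : (m + 1) % 4 = (m % 4 + 1) % 4 := by omega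
    have h2 : m % 4 < 4 := Nat.mod_lt _ (by norm_num)
    simp only [hQ, h1]
    set r := m % 4 with hr
    interval_cases r
    · norm_num
    · norm_num
    · norm_num
    · norm_num
      exact (Function.iterate_succ_apply' F 3 a).symm.trans h4
  have hshift : ∀ i j k, Collinear3 (Q i) (Q j) (Q k) →
      Collinear3 (Q (i + 1)) (Q (j + 1)) (Q (k + 1)) := by
    rintro i j k ⟨f, hf, h1, h2, h3⟩
    obtain ⟨g, hg, hv⟩ := frob_vanish p n f hf
    refine ⟨g, hg, ?_, ?_, ?_⟩
    · rw [← hstep i]; exact hv _ h1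
    · rw [← hstep j]; exact hv _ h2
    · rw [← hstep k]; exact hv _ h3
  have hshifts : ∀ s i j k, Collinear3 (Q i) (Q j) (Q k) →
      Collinear3 (Q (i + s)) (Q (j + s)) (Q (k + s)) := by
    intro s
    induction s with
    | zero => intro i j k h; simpa using h
    | succ t ih =>
      intro i j k h
      have := hshift _ _ _ (ih i j k h)
      simpa [← Nat.add_assoc] using this
  have hshifts' : ∀ s i j k, Collinear3 (Q i) (Q j) (Q k) →
      Collinear3 (Q ((i + s) % 4)) (Q ((j + s) % 4)) (Q ((k + s) % 4)) := by
    intro s i j k h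
    rw [← hQmod, ← hQmod, ← hQmod]
    exact hshifts s i j k h
  rw [← hQlt i hi, ← hQlt j hj, ← hQlt k hk] at hc
  have hsorted : ∃ x y z, x < y ∧ y < z ∧ z < 4 ∧ Collinear3 (Q x) (Q y) (Q z) := by
    rcases lt_trichotomy i j with h1 | h1 | h1
    · rcases lt_trichotomy j k with h2 | h2 | h2
      · exact ⟨i, j, k, h1, h2, hk, hc⟩
      · exact absurd h2 hjk
      · rcases lt_trichotomy i k with h3 | h3 | h3
        · exact ⟨i, k, j, h3, h2, hj, crot (cswap hc)⟩
        · exact absurd h3 hik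
        · exact ⟨k, i, j, h3, h1, hj, crot (crot hc)⟩
    · exact absurd h1 hij
    · rcases lt_trichotomy i k with h2 | h2 | h2
      · exact ⟨j, i, k, h1, h2, hk, cswap hc⟩
      · exact absurd h2 hik
      · rcases lt_trichotomy j k with h3 | h3 | h3
        · exact ⟨j, k, i, h3, h2, hi, crot hc⟩
        · exact absurd h3 hjk
        · exact ⟨k, j, i, h3, h1, hi, cswap (crot hc)⟩
  obtain ⟨x, y, z, hxy, hyz, hz4, hcs⟩ := hsorted
  obtain ⟨hA, hB⟩ : Collinear3 (Q 0) (Q 1) (Q 2) ∧ Collinear3 (Q 0) (Q 1) (Q 3) := by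
    interval_cases z <;> interval_cases y <;> interval_cases x
    · -- (0,1,2)
      refine ⟨hcs, ?_⟩
      have h := hshifts' 3 0 1 2 hcs
      norm_num at h
      exact crot h
    · -- (0,1,3)
      constructor
      · have h := hshifts' 1 0 1 3 hcs
        norm_num at h
        exact crot (crot h)
      · exact hcs
    · -- (0,2,3)
      constructor
      · have h := hshifts' 2 0 2 3 hcs
        norm_num at h
        exact crot h
      · have h := hshifts' 1 0 2 3 hcs
        norm_num at h
        exact crot (crot h)
    · -- (1,2,3)
      constructor
      · have h := hshifts' 3 1 2 3 hcs
        norm_num at h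
        exact h
      · have h := hshifts' 2 1 2 3 hcs
        norm_num at h
        exact crot h
  obtain ⟨f, hf, hf0, hf1, hf2⟩ := hA
  obtain ⟨g, hg, hg0, hg1, hg3⟩ := hB
  have hne : Q 0 ≠ Q 1 := by
    have h1 := horb 1 one_pos (by norm_num)
    rw [hQlt 0 (by norm_num), hQlt 1 (by norm_num)]
    intro h
    exact h1 (by simpa using h.symm)
  have hker := line_unique hf hg hne hf0 hf1 hg0 hg1
  have hf3 : f (Q 3).rep = 0 := by
    have h3 : (Q 3).rep ∈ LinearMap.ker g := hg3
    rw [← hker] at h3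
    exact h3
  refine ⟨Projectivization.mk (Kbar p n) f hf, ?_⟩
  intro m hm
  rw [show ((Frob (p ^ n))^[m] a : Pt (Kbar p n)) = F^[m] a from rfl, ← hQlt m hm]
  have hfm : f (Q m).rep = 0 := by
    interval_cases m
    · exact hf0
    · exact hf1
    · exact hf2
    · exact hf3
  obtain ⟨c, hc'⟩ := Projectivization.exists_smul_eq_mk_rep (Kbar p n) f hf
  show (Projectivization.mk (Kbar p n) f hf).rep (Q m).rep = 0
  rw [← hc', Units.smul_def]
  simp [hfm]
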